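/- arXiv:1505.02567 — 5 statements merged into one kernel-verified Lean document; each statement's English description precedes it below -/
import Mathlib

section
/- Discrete Poincaré inequality in 1D: let 0 = x₀ < x₁ < ... < x_{N+1} = L be a partition of (0,L), let v = (v₁,...,v_N) ∈ ℝ^N with the convention v₀ = v_{N+1} = 0, and let h_i = x_{i+1} - x_i. Then Σ_{i=1}^N h'_i v_i² ≤ L² Σ_{i=0}^N h_i ((v_{i+1}-v_i)/h_i)², where h'_i = (h_{i-1}+h_i)/2. -/
/-- Discrete Poincaré inequality in 1D: for a partition `0 = x₀ < x₁ < ... < x_{N+1} = L`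
of `(0,L)`, `v : ℕ → ℝ` with `v 0 = v (N+1) = 0`, and `h i = x (i+1) - x i`,
`Σ_{i=1}^N h'_i v_i² ≤ L² Σ_{i=0}^N h_i ((v_{i+1}-v_i)/h_i)²` where `h'_i = (h_{i-1}+h_i)/2`. -/
theorem discrete_poincare_1d (N : ℕ) (L : ℝ) (x : ℕ → ℝ)
    (hx0 : x 0 = 0) (hxL : x (N + 1) = L)
    (hmono : ∀ i ≤ N, x i < x (i + 1))
    (v : ℕ → ℝ) (hv0 : v 0 = 0) (hvN : v (N + 1) = 0) :
    ∑ i ∈ Finset.Icc 1 N, ((x i - x (i - 1)) + (x (i + 1) - x i)) / 2 * (v i) ^ 2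
      ≤ L ^ 2 * ∑ i ∈ Finset.range (N + 1),
          (x (i + 1) - x i) * ((v (i + 1) - v i) / (x (i + 1) - x i)) ^ 2 := by
  have mono : ∀ i j : ℕ, i ≤ j → j ≤ N + 1 → x i ≤ x j := by
    intro i j hij hjN
    induction j, hij using Nat.le_induction with
    | base => exact le_rfl
    | succ n hn ih =>
      exact le_trans (ih (by omega)) (le_of_lt (hmono n (by omega)))
  have hpos : ∀ i ≤ N, 0 < x (i + 1) - x i := fun i hi => sub_pos.mpr (hmono i hi)
  have hLnn : 0 ≤ L := by rw [← hxL, ← hx0]; exact mono 0 (N + 1) (by omega) le_rfl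
  set S := ∑ i ∈ Finset.range (N + 1),
      (x (i + 1) - x i) * ((v (i + 1) - v i) / (x (i + 1) - x i)) ^ 2 with hSdef
  have hS_nonneg : 0 ≤ S := Finset.sum_nonneg fun i hi => by
    have := hpos i (by simpa [Nat.lt_succ_iff] using hi)
    positivity
  have key : ∀ i ∈ Finset.Icc 1 N, v i ^ 2 ≤ L * S := by
    intro i hi
    simp only [Finset.mem_Icc] at hi
    have hvi : v i = ∑ j ∈ Finset.range i, (v (j + 1) - v j) := by
      rw [Finset.sum_range_sub, hv0, sub_zero]
    have cs := Finset.sum_mul_sq_le_sq_mul_sq (Finset.range i)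
      (fun j => Real.sqrt (x (j + 1) - x j))
      (fun j => (v (j + 1) - v j) / Real.sqrt (x (j + 1) - x j))
    have e1 : ∑ j ∈ Finset.range i,
        Real.sqrt (x (j + 1) - x j) * ((v (j + 1) - v j) / Real.sqrt (x (j + 1) - x j))
        = v i := by
      rw [hvi]
      refine Finset.sum_congr rfl fun j hj => ?_
      have hj' : j ≤ N := by simp at hj; omega
      have hp := hpos j hj'
      have hs : Real.sqrt (x (j + 1) - x j) ≠ 0 := by positivity
      rw [mul_comm, div_mul_cancel₀ _ hs]
    have e2 : ∑ j ∈ Finset.range i, Real.sqrt (x (j + 1) - x j) ^ 2 = x i := by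
      have : ∀ j ∈ Finset.range i, Real.sqrt (x (j + 1) - x j) ^ 2 = x (j + 1) - x j := by
        intro j hj
        have hj' : j ≤ N := by simp at hj; omega
        exact Real.sq_sqrt (le_of_lt (hpos j hj'))
      rw [Finset.sum_congr rfl this, Finset.sum_range_sub, hx0, sub_zero]
    have e3 : ∑ j ∈ Finset.range i,
        ((v (j + 1) - v j) / Real.sqrt (x (j + 1) - x j)) ^ 2
        = ∑ j ∈ Finset.range i,
        (x (j + 1) - x j) * ((v (j + 1) - v j) / (x (j + 1) - x j)) ^ 2 := by
      refine Finset.sum_congr rfl fun j hj => ?_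
      have hj' : j ≤ N := by simp at hj; omega
      have hp := hpos j hj'
      rw [div_pow, Real.sq_sqrt (le_of_lt hp)]
      field_simp
    rw [e1, e2, e3] at cs
    refine le_trans cs (mul_le_mul ?_ ?_ ?_ hLnn)
    · rw [← hxL]; exact mono i (N + 1) (by omega) le_rfl
    · refine Finset.sum_le_sum_of_subset_of_nonneg
        (Finset.range_subset_range.mpr (by omega)) fun j hj _ => ?_
      have hj' : j ≤ N := by simp at hj; omega
      have := hpos j hj'
      positivity
    · refine Finset.sum_nonneg fun j hj => ?_
      have hj' : j ≤ N := by simp at hj; omega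
      have := hpos j hj'
      positivity
  have tele : ∀ n : ℕ, ∑ i ∈ Finset.Icc 1 n, ((x i - x (i - 1)) + (x (i + 1) - x i))
      = (x n - x 0) + (x (n + 1) - x 1) := by
    intro n
    induction n with
    | zero => simp
    | succ n ih =>
      rw [Finset.sum_Icc_succ_top (by omega), ih]
      simp only [Nat.add_sub_cancel]
      ring
  have hprime_nonneg : ∀ i ∈ Finset.Icc 1 N,
      0 ≤ ((x i - x (i - 1)) + (x (i + 1) - x i)) / 2 := by
    intro i hi
    simp only [Finset.mem_Icc] at hi
    have h1 : x (i - 1) ≤ x i := mono (i - 1) i (by omega) (by omega)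
    have h2 : x i ≤ x (i + 1) := mono i (i + 1) (by omega) (by omega)
    linarith
  calc ∑ i ∈ Finset.Icc 1 N, ((x i - x (i - 1)) + (x (i + 1) - x i)) / 2 * v i ^ 2
      ≤ ∑ i ∈ Finset.Icc 1 N, ((x i - x (i - 1)) + (x (i + 1) - x i)) / 2 * (L * S) := by
        refine Finset.sum_le_sum fun i hi => ?_
        exact mul_le_mul_of_nonneg_left (key i hi) (hprime_nonneg i hi)
    _ = (∑ i ∈ Finset.Icc 1 N, ((x i - x (i - 1)) + (x (i + 1) - x i))) / 2 * (L * S) := by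
        rw [← Finset.sum_mul, ← Finset.sum_div]
    _ ≤ L * (L * S) := by
        have hxN : x N ≤ L := by rw [← hxL]; exact mono N (N + 1) (by omega) le_rfl
        have hx1 : 0 ≤ x 1 := by rw [← hx0]; exact mono 0 1 (by omega) (by omega)
        have hsum : (∑ i ∈ Finset.Icc 1 N, ((x i - x (i - 1)) + (x (i + 1) - x i))) / 2 ≤ L := by
          rw [tele N, hx0, hxL]; linarith
        have hLS : 0 ≤ L * S := mul_nonneg hLnn hS_nonneg
        exact mul_le_mul_of_nonneg_right hsum hLS
    _ = L ^ 2 * S := by ring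
end

section
/- A priori estimate for the TPFA scheme on a graph with Dirichlet boundary: let V = V_int ∪ V_bd be a finite set of cells, E a set of edges, τ_σ ≥ c·w_σ for positive weights w_σ and a constant c > 0, and suppose u : V → ℝ with u = 0 on V_bd satisfies the flux balances Σ_{σ ∋ K} τ_σ(u_K - u_L) = b_K for all K ∈ V_int. If the discrete Poincaré inequality Σ_{K∈V_int} m_K u_K² ≤ C_P² Σ_{σ={K,L}∈E} w_σ (u_K-u_L)² holds (with cell measures m_K > 0), then Σ_{σ∈E} w_σ (u_K-u_L)² ≤ (C_P/c)² Σ_{K∈V_int} b_K²/m_K. -/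
/-- The sum over edges incident to the cell `K` of the two-point fluxes
`F_{K,σ} = τ_σ (u_K - u_L)`. -/
def incidentFluxSum {V : Type*} [DecidableEq V] (E : Finset (V × V)) (τ : V × V → ℝ)
    (u : V → ℝ) (K : V) : ℝ :=
  (∑ σ ∈ E.filter fun σ => σ.1 = K, τ σ * (u K - u σ.2)) +
    ∑ σ ∈ E.filter fun σ => σ.2 = K, τ σ * (u K - u σ.1)

/-- A priori (energy) estimate for the TPFA scheme on a graph with Dirichlet boundary:
if `τ_σ ≥ c w_σ`, `u = 0` on boundary cells, the flux balances
`Σ_{σ∋K} τ_σ(u_K - u_L) = b_K` hold on interior cells, and the discrete Poincaré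
inequality `Σ_K m_K u_K² ≤ C_P² Σ_σ w_σ (u_K - u_L)²` holds, then
`Σ_σ w_σ (u_K - u_L)² ≤ (C_P/c)² Σ_K b_K²/m_K`. -/
theorem tpfa_apriori_estimate {V : Type*} [Fintype V] [DecidableEq V]
    (Vint : Finset V) (E : Finset (V × V)) (hE : ∀ σ ∈ E, σ.1 ≠ σ.2)
    (τ w : V × V → ℝ) (c CP : ℝ) (hc : 0 < c) (hCP : 0 ≤ CP)
    (hw : ∀ σ ∈ E, 0 < w σ) (hτ : ∀ σ ∈ E, c * w σ ≤ τ σ)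
    (m : V → ℝ) (hm : ∀ K ∈ Vint, 0 < m K)
    (u b : V → ℝ) (hbd : ∀ K, K ∉ Vint → u K = 0)
    (hflux : ∀ K ∈ Vint, incidentFluxSum E τ u K = b K)
    (hPoinc : ∑ K ∈ Vint, m K * u K ^ 2 ≤ CP ^ 2 * ∑ σ ∈ E, w σ * (u σ.1 - u σ.2) ^ 2) :
    ∑ σ ∈ E, w σ * (u σ.1 - u σ.2) ^ 2 ≤ (CP / c) ^ 2 * ∑ K ∈ Vint, b K ^ 2 / m K := by
  set S := ∑ σ ∈ E, w σ * (u σ.1 - u σ.2) ^ 2 with hSdef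
  set T := ∑ K ∈ Vint, b K ^ 2 / m K with hTdef
  have hS0 : 0 ≤ S := Finset.sum_nonneg fun σ hσ => mul_nonneg (hw σ hσ).le (sq_nonneg _)
  have hT0 : 0 ≤ T := Finset.sum_nonneg fun K hK => div_nonneg (sq_nonneg _) (hm K hK).le
  -- key summation-by-parts identity
  have key : ∑ K ∈ Vint, u K * b K = ∑ σ ∈ E, τ σ * (u σ.1 - u σ.2) ^ 2 := by
    have h1 : ∑ K ∈ Vint, u K * b K = ∑ K : V, u K * incidentFluxSum E τ u K := by
      rw [← Finset.sum_subset (Finset.subset_univ Vint)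
        (fun K _ hK => by rw [hbd K hK, zero_mul])]
      exact Finset.sum_congr rfl fun K hK => by rw [hflux K hK]
    have h2 : ∀ K : V, u K * incidentFluxSum E τ u K =
        (∑ σ ∈ E.filter fun σ => σ.1 = K, u σ.1 * (τ σ * (u σ.1 - u σ.2))) +
        ∑ σ ∈ E.filter fun σ => σ.2 = K, u σ.2 * (τ σ * (u σ.2 - u σ.1)) := by
      intro K
      rw [incidentFluxSum, mul_add, Finset.mul_sum, Finset.mul_sum]
      congr 1
      · exact Finset.sum_congr rfl fun σ hσ => by
          obtain ⟨-, h⟩ := Finset.mem_filter.mp hσ; rw [h]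
      · exact Finset.sum_congr rfl fun σ hσ => by
          obtain ⟨-, h⟩ := Finset.mem_filter.mp hσ; rw [h]
    rw [h1]
    simp_rw [h2]
    rw [Finset.sum_add_distrib,
      Finset.sum_fiberwise_of_maps_to (fun σ _ => Finset.mem_univ σ.1),
      Finset.sum_fiberwise_of_maps_to (fun σ _ => Finset.mem_univ σ.2),
      ← Finset.sum_add_distrib]
    exact Finset.sum_congr rfl fun σ _ => by ring
  have hcS : c * S ≤ ∑ K ∈ Vint, u K * b K := by
    rw [key, hSdef, Finset.mul_sum]
    refine Finset.sum_le_sum fun σ hσ => ?_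
    rw [← mul_assoc]
    exact mul_le_mul_of_nonneg_right (hτ σ hσ) (sq_nonneg _)
  -- Cauchy–Schwarz
  have e1 : ∑ K ∈ Vint, Real.sqrt (m K) * u K * (b K / Real.sqrt (m K)) =
      ∑ K ∈ Vint, u K * b K := by
    refine Finset.sum_congr rfl fun K hK => ?_
    have hs : Real.sqrt (m K) ≠ 0 := Real.sqrt_ne_zero'.mpr (hm K hK)
    field_simp
  have e2 : ∑ K ∈ Vint, (Real.sqrt (m K) * u K) ^ 2 = ∑ K ∈ Vint, m K * u K ^ 2 :=
    Finset.sum_congr rfl fun K hK => by rw [mul_pow, Real.sq_sqrt (hm K hK).le]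
  have e3 : ∑ K ∈ Vint, (b K / Real.sqrt (m K)) ^ 2 = T :=
    Finset.sum_congr rfl fun K hK => by rw [div_pow, Real.sq_sqrt (hm K hK).le]
  have hCS : (∑ K ∈ Vint, u K * b K) ^ 2 ≤ (∑ K ∈ Vint, m K * u K ^ 2) * T := by
    calc (∑ K ∈ Vint, u K * b K) ^ 2
        = (∑ K ∈ Vint, Real.sqrt (m K) * u K * (b K / Real.sqrt (m K))) ^ 2 := by rw [e1]
      _ ≤ (∑ K ∈ Vint, (Real.sqrt (m K) * u K) ^ 2) *
          ∑ K ∈ Vint, (b K / Real.sqrt (m K)) ^ 2 :=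
        Finset.sum_mul_sq_le_sq_mul_sq Vint _ _
      _ = (∑ K ∈ Vint, m K * u K ^ 2) * T := by rw [e2, e3]
  have h1 : (c * S) ^ 2 ≤ (∑ K ∈ Vint, u K * b K) ^ 2 :=
    pow_le_pow_left₀ (mul_nonneg hc.le hS0) hcS 2
  have hA : (c * S) ^ 2 ≤ CP ^ 2 * S * T :=
    h1.trans (hCS.trans (by
      have := mul_le_mul_of_nonneg_right hPoinc hT0
      linarith))
  rcases hS0.eq_or_lt with h | h
  · rw [← h]
    exact mul_nonneg (by positivity) hT0
  · have hA' : c ^ 2 * S ≤ CP ^ 2 * T := by nlinarith [hA, h]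
    rw [div_pow, div_mul_eq_mul_div, le_div_iff₀ (by positivity)]
    nlinarith [hA']
end

section
/- Existence and uniqueness for the TPFA scheme: with V_int finite, edges E with transmissivities τ_σ > 0, and such that every connected component of the graph (V, E) contains a boundary cell, the linear system Σ_{σ ∋ K} τ_σ(u_K - u_L) = b_K (K ∈ V_int), with u_L = 0 for boundary cells L, has a unique solution u : V_int → ℝ for every right-hand side b. -/
/-- Adjacency relation of the (unoriented) graph whose edges are stored in `E`. -/
def graphAdj {V : Type*} (E : Finset (V × V)) (K L : V) : Prop :=
  (K, L) ∈ E ∨ (L, K) ∈ E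

lemma incidentFluxSum_linear {V : Type*} [DecidableEq V] (E : Finset (V × V)) (τ : V × V → ℝ)
    (u v : V → ℝ) (c : ℝ) (K : V) :
    incidentFluxSum E τ (fun x => c * u x + v x) K
      = c * incidentFluxSum E τ u K + incidentFluxSum E τ v K := by
  unfold incidentFluxSum
  rw [mul_add, Finset.mul_sum, Finset.mul_sum, add_add_add_comm,
    ← Finset.sum_add_distrib, ← Finset.sum_add_distrib]
  congr 1 <;> apply Finset.sum_congr rfl <;> intro σ _ <;> simp only [] <;> ring

lemma energy {V : Type*} [Fintype V] [DecidableEq V] (E : Finset (V × V)) (τ : V × V → ℝ)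
    (u : V → ℝ) :
    ∑ K, u K * incidentFluxSum E τ u K = ∑ σ ∈ E, τ σ * (u σ.1 - u σ.2) ^ 2 := by
  unfold incidentFluxSum
  have h1 : ∀ K : V, u K * ((∑ σ ∈ E.filter fun σ => σ.1 = K, τ σ * (u K - u σ.2)) +
      ∑ σ ∈ E.filter fun σ => σ.2 = K, τ σ * (u K - u σ.1))
      = (∑ σ ∈ E.filter fun σ => σ.1 = K, τ σ * (u σ.1 - u σ.2) * u σ.1) +
        ∑ σ ∈ E.filter fun σ => σ.2 = K, τ σ * (u σ.2 - u σ.1) * u σ.2 := by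
    intro K
    rw [mul_add, Finset.mul_sum, Finset.mul_sum]
    congr 1 <;> apply Finset.sum_congr rfl <;> intro σ hσ <;>
      rw [Finset.mem_filter] at hσ <;> rw [hσ.2] <;> ring
  simp_rw [h1]
  rw [Finset.sum_add_distrib,
    Finset.sum_fiberwise E (fun σ => σ.1) (fun σ => τ σ * (u σ.1 - u σ.2) * u σ.1),
    Finset.sum_fiberwise E (fun σ => σ.2) (fun σ => τ σ * (u σ.2 - u σ.1) * u σ.2),
    ← Finset.sum_add_distrib]
  apply Finset.sum_congr rfl
  intro σ _; ring

lemma ker_zero {V : Type*} [Fintype V] [DecidableEq V]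
    (Vint : Finset V) (E : Finset (V × V))
    (τ : V × V → ℝ) (hτ : ∀ σ ∈ E, 0 < τ σ)
    (hconn : ∀ K : V, ∃ B : V, B ∉ Vint ∧ Relation.ReflTransGen (graphAdj E) K B)
    (u : V → ℝ) (h0 : ∀ K, K ∉ Vint → u K = 0)
    (hflux : ∀ K ∈ Vint, incidentFluxSum E τ u K = 0) : u = 0 := by
  have hsum : ∑ σ ∈ E, τ σ * (u σ.1 - u σ.2) ^ 2 = 0 := by
    rw [← energy]
    apply Finset.sum_eq_zero
    intro K _
    by_cases hK : K ∈ Vint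
    · rw [hflux K hK, mul_zero]
    · rw [h0 K hK, zero_mul]
  have hedge : ∀ σ ∈ E, u σ.1 = u σ.2 := by
    intro σ hσ
    have hnn : ∀ σ ∈ E, 0 ≤ τ σ * (u σ.1 - u σ.2) ^ 2 := fun σ hσ =>
      mul_nonneg (hτ σ hσ).le (sq_nonneg _)
    have := (Finset.sum_eq_zero_iff_of_nonneg hnn).mp hsum σ hσ
    have h2 : (u σ.1 - u σ.2) ^ 2 = 0 := by
      rcases mul_eq_zero.mp this with h | h
      · exact absurd h (hτ σ hσ).ne'
      · exact h
    have := pow_eq_zero_iff (n := 2) (by norm_num) |>.mp h2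
    linarith
  have hpath' : ∀ {x y : V}, Relation.ReflTransGen (graphAdj E) x y → u x = u y := by
    intro x y h
    induction h with
    | refl => rfl
    | tail _ hadj ih =>
        refine ih.trans ?_
        rcases hadj with h | h
        · exact hedge _ h
        · exact (hedge _ h).symm
  funext K
  obtain ⟨B, hB, hpath⟩ := hconn K
  rw [Pi.zero_apply, hpath' hpath, h0 B hB]

/-- Existence and uniqueness for the TPFA scheme: if all transmissivities are positive and
every connected component of the graph contains a boundary cell, then for every right-hand
side `b` there is a unique `u` vanishing on boundary cells and satisfying the flux balances
`Σ_{σ∋K} τ_σ(u_K - u_L) = b_K` on interior cells. -/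
theorem tpfa_exists_unique {V : Type*} [Fintype V] [DecidableEq V]
    (Vint : Finset V) (E : Finset (V × V)) (hE : ∀ σ ∈ E, σ.1 ≠ σ.2)
    (τ : V × V → ℝ) (hτ : ∀ σ ∈ E, 0 < τ σ)
    (hconn : ∀ K : V, ∃ B : V, B ∉ Vint ∧ Relation.ReflTransGen (graphAdj E) K B) :
    ∀ b : V → ℝ, ∃! u : V → ℝ,
      (∀ K, K ∉ Vint → u K = 0) ∧ ∀ K ∈ Vint, incidentFluxSum E τ u K = b K := by
  intro b
  set T : (V → ℝ) →ₗ[ℝ] (V → ℝ) :=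
    { toFun := fun u K => if K ∈ Vint then incidentFluxSum E τ u K else u K
      map_add' := by
        intro u v
        funext K
        by_cases hK : K ∈ Vint
        · simp only [hK, if_pos, Pi.add_apply]
          have he : (u + v) = (fun x => (1:ℝ) * u x + v x) := by funext x; simp
          rw [he, incidentFluxSum_linear, one_mul]
        · simp [hK]
      map_smul' := by
        intro c u
        funext K
        by_cases hK : K ∈ Vint
        · simp only [hK, if_pos, Pi.smul_apply, smul_eq_mul, RingHom.id_apply]
          have h0 : incidentFluxSum E τ (fun _ => (0:ℝ)) K = 0 := by
            unfold incidentFluxSum; simp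
          have he : (c • u) = (fun x => c * u x + (fun _ => (0:ℝ)) x) := by funext x; simp
          rw [he, incidentFluxSum_linear, h0, add_zero]
        · simp [hK] } with hT
  have hinj : Function.Injective T := by
    rw [injective_iff_map_eq_zero]
    intro u hu
    have h0 : ∀ K, K ∉ Vint → u K = 0 := by
      intro K hK
      have := congrFun hu K
      simpa [hT, hK] using this
    have hflux : ∀ K ∈ Vint, incidentFluxSum E τ u K = 0 := by
      intro K hK
      have := congrFun hu K
      simpa [hT, hK] using this
    exact ker_zero Vint E τ hτ hconn u h0 hflux
  have hsurj : Function.Surjective T := LinearMap.injective_iff_surjective.mp hinj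
  obtain ⟨u, hu⟩ := hsurj (fun K => if K ∈ Vint then b K else 0)
  refine ⟨u, ⟨?_, ?_⟩, ?_⟩
  · intro K hK
    have := congrFun hu K
    simpa [hT, hK] using this
  · intro K hK
    have := congrFun hu K
    simpa [hT, hK] using this
  · intro v ⟨hv0, hvf⟩
    apply hinj
    rw [hu]
    funext K
    by_cases hK : K ∈ Vint <;> simp only [hT, LinearMap.coe_mk, AddHom.coe_mk, hK,
      if_pos, if_neg, ite_true, ite_false]
    · exact hvf K hK
    · exact hv0 K hK
end

section
/- Maximum principle for the TPFA scheme: under the assumptions of the previous statement, if b_K ≥ 0 for all K ∈ V_int, then the solution u of the TPFA system satisfies u_K ≥ 0 for all K ∈ V_int. -/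
/-- Maximum principle for the TPFA scheme: with positive transmissivities, every connected
component touching the boundary, homogeneous Dirichlet values `u = 0` on boundary cells and
flux balances `Σ_{σ∋K} τ_σ(u_K - u_L) = b_K` on interior cells, if `b_K ≥ 0` for all
interior `K` then `u_K ≥ 0` for all interior `K`. -/
theorem tpfa_maximum_principle {V : Type*} [Fintype V] [DecidableEq V]
    (Vint : Finset V) (E : Finset (V × V)) (hE : ∀ σ ∈ E, σ.1 ≠ σ.2)
    (τ : V × V → ℝ) (hτ : ∀ σ ∈ E, 0 < τ σ)
    (hconn : ∀ K : V, ∃ B : V, B ∉ Vint ∧ Relation.ReflTransGen (graphAdj E) K B)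
    (u b : V → ℝ) (hbd : ∀ K, K ∉ Vint → u K = 0)
    (hflux : ∀ K ∈ Vint, incidentFluxSum E τ u K = b K)
    (hb : ∀ K ∈ Vint, 0 ≤ b K) :
    ∀ K ∈ Vint, 0 ≤ u K := by
  intro K hK
  by_contra hneg
  push_neg at hneg
  obtain ⟨K0, -, hK0⟩ :=
    Finset.exists_min_image Finset.univ u ⟨K, Finset.mem_univ K⟩
  have hmin : ∀ L, u K0 ≤ u L := fun L => hK0 L (Finset.mem_univ L)
  have hK0neg : u K0 < 0 := lt_of_le_of_lt (hmin K) hneg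
  have key : ∀ L, Relation.ReflTransGen (graphAdj E) K0 L → u L = u K0 := by
    intro L hL
    induction hL with
    | refl => rfl
    | @tail c d _ hadj ih =>
      have hc : c ∈ Vint := by
        by_contra hcn
        rw [hbd c hcn] at ih
        exact absurd ih.symm (ne_of_lt hK0neg)
      have hnp1 : ∀ σ ∈ E.filter fun σ => σ.1 = c, τ σ * (u c - u σ.2) ≤ 0 := by
        intro σ hσ
        have := hτ σ (Finset.mem_filter.mp hσ).1
        have h2 : u c - u σ.2 ≤ 0 := by
          have := hmin σ.2; rw [← ih] at this; linarith
        nlinarith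
      have hnp2 : ∀ σ ∈ E.filter fun σ => σ.2 = c, τ σ * (u c - u σ.1) ≤ 0 := by
        intro σ hσ
        have := hτ σ (Finset.mem_filter.mp hσ).1
        have h2 : u c - u σ.1 ≤ 0 := by
          have := hmin σ.1; rw [← ih] at this; linarith
        nlinarith
      have hs1 : (∑ σ ∈ E.filter fun σ => σ.1 = c, τ σ * (u c - u σ.2)) ≤ 0 :=
        Finset.sum_nonpos hnp1
      have hs2 : (∑ σ ∈ E.filter fun σ => σ.2 = c, τ σ * (u c - u σ.1)) ≤ 0 :=
        Finset.sum_nonpos hnp2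
      have htot : incidentFluxSum E τ u c = b c := hflux c hc
      have hbnn := hb c hc
      unfold incidentFluxSum at htot
      have hz1 : (∑ σ ∈ E.filter fun σ => σ.1 = c, τ σ * (u c - u σ.2)) = 0 := by
        linarith
      have hz2 : (∑ σ ∈ E.filter fun σ => σ.2 = c, τ σ * (u c - u σ.1)) = 0 := by
        linarith
      cases hadj with
      | inl hcd =>
        have hmem : (c, d) ∈ E.filter fun σ => σ.1 = c :=
          Finset.mem_filter.mpr ⟨hcd, rfl⟩
        have := (Finset.sum_eq_zero_iff_of_nonpos hnp1).mp hz1 (c, d) hmem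
        have hτpos := hτ (c, d) hcd
        have : u c - u d = 0 := by
          rcases mul_eq_zero.mp this with h | h
          · exact absurd h (ne_of_gt hτpos)
          · exact h
        rw [← ih]; linarith
      | inr hdc =>
        have hmem : (d, c) ∈ E.filter fun σ => σ.2 = c :=
          Finset.mem_filter.mpr ⟨hdc, rfl⟩
        have := (Finset.sum_eq_zero_iff_of_nonpos hnp2).mp hz2 (d, c) hmem
        have hτpos := hτ (d, c) hdc
        have : u c - u d = 0 := by
          rcases mul_eq_zero.mp this with h | h
          · exact absurd h (ne_of_gt hτpos)
          · exact h
        rw [← ih]; linarith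
  obtain ⟨B, hB, hpath⟩ := hconn K0
  have := key B hpath
  rw [hbd B hB] at this
  exact absurd this.symm (ne_of_lt hK0neg)
end

section
/- Discrete time-translate estimate: let u : [0,T] → L²(Ω) be absolutely continuous with derivative ∂_t u ∈ L²(0,T; H^{-1}(Ω)) and u ∈ L²(0,T; H¹₀(Ω)). Then for all τ ∈ (0,T), ∫_0^{T-τ} ‖u(t+τ) - u(t)‖²_{L²(Ω)} dt ≤ τ · 2‖∂_t u‖_{L²(0,T;H^{-1})} ‖u‖_{L²(0,T;H¹₀)}. -/
open MeasureTheory intervalIntegral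

private lemma amgm_inf {S a b : ℝ} (ha : 0 ≤ a) (hb : 0 ≤ b)
    (h : ∀ μ : ℝ, 0 < μ → S ≤ μ⁻¹ * a + μ * b) :
    S ≤ 2 * Real.sqrt a * Real.sqrt b := by
  rcases ha.eq_or_lt' with ha0 | ha
  · subst ha0
    have hS : S ≤ 0 := by
      refine le_of_forall_pos_le_add fun ε hε => ?_
      rcases hb.eq_or_lt' with hb0 | hb
      · have := h 1 one_pos; simp [← hb0] at this; linarith
      · have := h (ε / b) (div_pos hε hb)
        rw [div_mul_cancel₀ _ hb.ne'] at this
        simpa using this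
    have : 0 ≤ 2 * Real.sqrt 0 * Real.sqrt b := by positivity
    linarith
  rcases hb.eq_or_lt' with hb0 | hb
  · subst hb0
    have hS : S ≤ 0 := by
      refine le_of_forall_pos_le_add fun ε hε => ?_
      have := h (a / ε) (div_pos ha hε)
      rw [inv_div, div_mul_cancel₀ _ ha.ne'] at this
      simpa using this
    have : 0 ≤ 2 * Real.sqrt a * Real.sqrt 0 := by positivity
    linarith
  have hsa : 0 < Real.sqrt a := Real.sqrt_pos.2 ha
  have hsb : 0 < Real.sqrt b := Real.sqrt_pos.2 hb
  have := h (Real.sqrt a / Real.sqrt b) (div_pos hsa hsb)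
  have h2 : (Real.sqrt a / Real.sqrt b)⁻¹ * a + (Real.sqrt a / Real.sqrt b) * b
      = 2 * Real.sqrt a * Real.sqrt b := by
    have ea : Real.sqrt a * Real.sqrt a = a := Real.mul_self_sqrt ha.le
    have eb : Real.sqrt b * Real.sqrt b = b := Real.mul_self_sqrt hb.le
    field_simp
    nlinarith [ea, eb]
  linarith [this, h2.ge]

/-- Time-translate estimate: let `V` be the (abstract) space `H¹₀(Ω)`, `H` the Hilbert
space `L²(Ω)` with embedding `i : V → H`, and let `u : [0,T] → H` be absolutely continuous
with derivative `∂_t u = u' ∈ L²(0,T;V')` — encoded by the identity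
`‖u(t+τ)-u(t)‖²_H = ∫_t^{t+τ} ⟨u'(s), u(t+τ)-u(t)⟩ ds` — and `u ∈ L²(0,T;V)`. Then for
`τ ∈ (0,T)`:
`∫_0^{T-τ} ‖u(t+τ) - u(t)‖²_{L²} dt ≤ τ · 2 ‖∂_t u‖_{L²(0,T;H⁻¹)} ‖u‖_{L²(0,T;H¹₀)}`. -/
theorem time_translate_estimate
    {V H : Type*} [NormedAddCommGroup V] [NormedSpace ℝ V]
    [NormedAddCommGroup H] [InnerProductSpace ℝ H]
    (i : V →L[ℝ] H)
    (T τ : ℝ) (hT : 0 < T) (hτ0 : 0 < τ) (hτT : τ < T)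
    (u : ℝ → V) (u' : ℝ → V →L[ℝ] ℝ)
    -- absolute continuity with derivative `u'` in the dual of `V`:
    (hAC : ∀ t, 0 ≤ t → t + τ ≤ T →
      ‖i (u (t + τ)) - i (u t)‖ ^ 2 = ∫ s in t..(t + τ), u' s (u (t + τ) - u t))
    -- `∂_t u ∈ L²(0,T;V')` and `u ∈ L²(0,T;V)`:
    (hu'2 : IntervalIntegrable (fun s => ‖u' s‖ ^ 2) volume 0 T)
    (hu2 : IntervalIntegrable (fun s => ‖u s‖ ^ 2) volume 0 T)
    (huH2 : IntervalIntegrable (fun t => ‖i (u (t + τ)) - i (u t)‖ ^ 2) volume 0 (T - τ)) :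
    ∫ t in (0 : ℝ)..(T - τ), ‖i (u (t + τ)) - i (u t)‖ ^ 2
      ≤ τ * (2 * Real.sqrt (∫ s in (0 : ℝ)..T, ‖u' s‖ ^ 2) *
        Real.sqrt (∫ s in (0 : ℝ)..T, ‖u s‖ ^ 2)) := by
  set X := ∫ s in (0 : ℝ)..T, ‖u' s‖ ^ 2 with hX
  set Y := ∫ s in (0 : ℝ)..T, ‖u s‖ ^ 2 with hY
  have hTτ : (0:ℝ) ≤ T - τ := by linarith
  -- sub-interval integrability helpers
  have hsub : ∀ {a b : ℝ}, 0 ≤ a → a ≤ b → b ≤ T →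
      IntervalIntegrable (fun s => ‖u' s‖ ^ 2) volume a b := by
    intro a b h0 hab hbT
    refine hu'2.mono_set ?_
    rw [Set.uIcc_of_le hab, Set.uIcc_of_le hT.le]
    exact Set.Icc_subset_Icc h0 hbT
  have hsubu : ∀ {a b : ℝ}, 0 ≤ a → a ≤ b → b ≤ T →
      IntervalIntegrable (fun s => ‖u s‖ ^ 2) volume a b := by
    intro a b h0 hab hbT
    refine hu2.mono_set ?_
    rw [Set.uIcc_of_le hab, Set.uIcc_of_le hT.le]
    exact Set.Icc_subset_Icc h0 hbT
  have hXnn : 0 ≤ X := intervalIntegral.integral_nonneg hT.le (fun x _ => by positivity)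
  have hYnn : 0 ≤ Y := intervalIntegral.integral_nonneg hT.le (fun x _ => by positivity)
  set F : ℝ → ℝ := fun s => ∫ x in (0:ℝ)..s, ‖u' x‖ ^ 2 with hF
  have hFdiff : ∀ {a b : ℝ}, 0 ≤ a → a ≤ b → b ≤ T →
      F b - F a = ∫ x in a..b, ‖u' x‖ ^ 2 := by
    intro a b h0 hab hbT
    have := integral_add_adjacent_intervals (hsub le_rfl h0 (hab.trans hbT))
      (hsub h0 hab hbT)
    simp only [hF]; linarith [this]
  have hFnn : ∀ {a : ℝ}, 0 ≤ a → 0 ≤ F a := fun {a} h0 =>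
    intervalIntegral.integral_nonneg h0 (fun x _ => by positivity)
  have hFleX : ∀ {a : ℝ}, 0 ≤ a → a ≤ T → F a ≤ X := by
    intro a h0 haT
    have := hFdiff h0 haT le_rfl
    have h2 : 0 ≤ ∫ x in a..T, ‖u' x‖ ^ 2 :=
      intervalIntegral.integral_nonneg haT (fun x _ => by positivity)
    simp only [hX]; linarith
  have hFcont : ContinuousOn F (Set.Icc 0 T) := by
    have := intervalIntegral.continuousOn_primitive_interval
      (f := fun s => ‖u' s‖ ^ 2) (μ := volume) (a := (0:ℝ)) (b := T)
      (by rw [Set.uIcc_of_le hT.le]; exact (intervalIntegrable_iff_integrableOn_Icc_of_le hT.le).1 hu'2)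
    rwa [Set.uIcc_of_le hT.le] at this
  -- interval integrability of the pieces over [0, T-τ]
  have hFint : IntervalIntegrable F volume 0 (T - τ) :=
    (hFcont.mono (Set.Icc_subset_Icc le_rfl (by linarith))).intervalIntegrable_of_Icc hTτ
  have hFshiftint : IntervalIntegrable (fun t => F (t + τ)) volume 0 (T - τ) := by
    have : IntervalIntegrable F volume τ T :=
      (hFcont.mono (Set.Icc_subset_Icc hτ0.le le_rfl)).intervalIntegrable_of_Icc (by linarith)
    simpa [sub_self] using this.comp_add_right τ
  have hushiftint : IntervalIntegrable (fun t => ‖u (t + τ)‖ ^ 2) volume 0 (T - τ) := by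
    have := (hsubu hτ0.le (le_of_lt hτT) le_rfl).comp_add_right τ
    simpa [sub_self] using this
  have huplainint : IntervalIntegrable (fun t => ‖u t‖ ^ 2) volume 0 (T - τ) :=
    hsubu le_rfl hTτ (by linarith)
  -- the shifted integrals are bounded by Y
  have hshiftY : ∫ t in (0:ℝ)..(T - τ), ‖u (t + τ)‖ ^ 2 ≤ Y := by
    have h1 : (∫ t in (0:ℝ)..(T - τ), ‖u (t + τ)‖ ^ 2)
        = ∫ t in τ..T, ‖u t‖ ^ 2 := by
      have := intervalIntegral.integral_comp_add_right (a := (0:ℝ)) (b := T - τ)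
        (fun t => ‖u t‖ ^ 2) τ
      simpa using this
    rw [h1]
    have h2 := integral_add_adjacent_intervals (hsubu le_rfl hτ0.le hτT.le)
      (hsubu hτ0.le hτT.le le_rfl)
    have h3 : 0 ≤ ∫ t in (0:ℝ)..τ, ‖u t‖ ^ 2 :=
      intervalIntegral.integral_nonneg hτ0.le (fun x _ => by positivity)
    simp only [hY]; linarith
  have hplainY : ∫ t in (0:ℝ)..(T - τ), ‖u t‖ ^ 2 ≤ Y := by
    have h2 := integral_add_adjacent_intervals (hsubu le_rfl hTτ (by linarith))
      (hsubu hTτ (by linarith) le_rfl)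
    have h3 : 0 ≤ ∫ t in (T - τ)..T, ‖u t‖ ^ 2 :=
      intervalIntegral.integral_nonneg (by linarith) (fun x _ => by positivity)
    simp only [hY]; linarith
  -- key translation bound for F
  have hFbound : ∫ t in (0:ℝ)..(T - τ), (F (t + τ) - F t) ≤ τ * X := by
    have hsplit : (∫ t in (0:ℝ)..(T - τ), (F (t + τ) - F t))
        = (∫ t in (0:ℝ)..(T - τ), F (t + τ)) - ∫ t in (0:ℝ)..(T - τ), F t :=
      intervalIntegral.integral_sub hFshiftint hFint
    have h1 : (∫ t in (0:ℝ)..(T - τ), F (t + τ)) = ∫ t in τ..T, F t := by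
      have := intervalIntegral.integral_comp_add_right (a := (0:ℝ)) (b := T - τ) F τ
      simp only [zero_add, sub_add_cancel] at this
      exact this
    have hFτ : IntervalIntegrable F volume 0 τ :=
      (hFcont.mono (Set.Icc_subset_Icc le_rfl hτT.le)).intervalIntegrable_of_Icc hτ0.le
    have hFmid : IntervalIntegrable F volume τ (T - τ) := by
      rcases le_or_gt τ (T - τ) with h | h
      · exact (hFcont.mono (Set.Icc_subset_Icc hτ0.le (by linarith))).intervalIntegrable_of_Icc h
      · exact ((hFcont.mono (Set.Icc_subset_Icc hTτ hτT.le)).intervalIntegrable_of_Icc h.le).symm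
    have hFend : IntervalIntegrable F volume (T - τ) T :=
      (hFcont.mono (Set.Icc_subset_Icc hTτ le_rfl)).intervalIntegrable_of_Icc (by linarith)
    have e1 := integral_add_adjacent_intervals hFτ hFmid  -- ∫0τ + ∫τ(T-τ) = ∫0(T-τ)
    have e2 := integral_add_adjacent_intervals hFmid hFend -- ∫τ(T-τ) + ∫(T-τ)T = ∫τT
    have hendbound : ∫ t in (T - τ)..T, F t ≤ τ * X := by
      have : ∫ t in (T - τ)..T, F t ≤ ∫ t in (T - τ)..T, X := by
        apply intervalIntegral.integral_mono_on (by linarith) hFend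
          (intervalIntegrable_const)
        intro x hx
        exact hFleX (le_trans hTτ hx.1) hx.2
      simpa [mul_comm] using this.trans_eq (by simp [mul_comm])
    have hτnn : 0 ≤ ∫ t in (0:ℝ)..τ, F t :=
      intervalIntegral.integral_nonneg hτ0.le (fun x hx => hFnn hx.1)
    rw [hsplit, h1]
    linarith
  -- pointwise estimate
  have hpt : ∀ μ : ℝ, 0 < μ → ∀ t ∈ Set.Icc (0:ℝ) (T - τ),
      ‖i (u (t + τ)) - i (u t)‖ ^ 2
        ≤ (2 * μ)⁻¹ * (F (t + τ) - F t) + μ * τ * (‖u (t + τ)‖ ^ 2 + ‖u t‖ ^ 2) := by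
    intro μ hμ t ht
    have ht0 : 0 ≤ t := ht.1
    have htT : t + τ ≤ T := by have := ht.2; linarith
    have htt : t ≤ t + τ := by linarith
    rw [hAC t ht0 htT]
    set c : ℝ := μ * (‖u (t + τ)‖ ^ 2 + ‖u t‖ ^ 2) with hc
    have hcnn : 0 ≤ c := by positivity
    have hhint : IntervalIntegrable (fun s => (2 * μ)⁻¹ * ‖u' s‖ ^ 2 + c) volume t (t + τ) :=
      ((hsub ht0 htt htT).const_mul _).add intervalIntegrable_const
    have hle : ∀ s ∈ Set.Icc t (t + τ),
        u' s (u (t + τ) - u t) ≤ (2 * μ)⁻¹ * ‖u' s‖ ^ 2 + c := by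
      intro s _
      have h1 : u' s (u (t + τ) - u t) ≤ ‖u' s‖ * ‖u (t + τ) - u t‖ :=
        le_trans (le_abs_self _) ((u' s).le_opNorm _)
      have h2 : ‖u (t + τ) - u t‖ ≤ ‖u (t + τ)‖ + ‖u t‖ := norm_sub_le _ _
      have h3 : ‖u' s‖ * (‖u (t + τ)‖ + ‖u t‖)
          ≤ (2 * μ)⁻¹ * ‖u' s‖ ^ 2 + μ / 2 * (‖u (t + τ)‖ + ‖u t‖) ^ 2 := by
        rw [← sub_nonneg]
        have expand : (2 * μ)⁻¹ * ‖u' s‖ ^ 2 + μ / 2 * (‖u (t + τ)‖ + ‖u t‖) ^ 2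
            - ‖u' s‖ * (‖u (t + τ)‖ + ‖u t‖)
            = (2 * μ)⁻¹ * (‖u' s‖ - μ * (‖u (t + τ)‖ + ‖u t‖)) ^ 2 := by
          field_simp
          ring
        rw [expand]
        positivity
      have h4 : μ / 2 * (‖u (t + τ)‖ + ‖u t‖) ^ 2 ≤ c := by
        rw [hc]
        nlinarith [sq_nonneg (‖u (t + τ)‖ - ‖u t‖), hμ]
      have h5 : ‖u' s‖ * ‖u (t + τ) - u t‖ ≤ ‖u' s‖ * (‖u (t + τ)‖ + ‖u t‖) :=
        mul_le_mul_of_nonneg_left h2 (norm_nonneg _)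
      linarith
    have hRHS : (∫ s in t..(t + τ), ((2 * μ)⁻¹ * ‖u' s‖ ^ 2 + c))
        = (2 * μ)⁻¹ * (F (t + τ) - F t) + μ * τ * (‖u (t + τ)‖ ^ 2 + ‖u t‖ ^ 2) := by
      rw [intervalIntegral.integral_add ((hsub ht0 htt htT).const_mul _)
        intervalIntegrable_const, intervalIntegral.integral_const_mul,
        intervalIntegral.integral_const, ← hFdiff ht0 htt htT]
      simp [hc]
      ring
    rw [← hRHS]
    by_cases hg : IntervalIntegrable (fun s => u' s (u (t + τ) - u t)) volume t (t + τ)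
    · exact intervalIntegral.integral_mono_on htt hg hhint hle
    · rw [intervalIntegral.integral_undef]
      · apply intervalIntegral.integral_nonneg htt
        intro x _
        positivity
      · exact hg
  -- integrate the pointwise estimate
  have hint : ∀ μ : ℝ, 0 < μ →
      (∫ t in (0:ℝ)..(T - τ), ‖i (u (t + τ)) - i (u t)‖ ^ 2)
        ≤ μ⁻¹ * (τ * X / 2) + μ * (2 * τ * Y) := by
    intro μ hμ
    have hGint : IntervalIntegrable
        (fun t => (2 * μ)⁻¹ * (F (t + τ) - F t) + μ * τ * (‖u (t + τ)‖ ^ 2 + ‖u t‖ ^ 2))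
        volume 0 (T - τ) :=
      (((hFshiftint.sub hFint).const_mul _)).add
        (((hushiftint.add huplainint)).const_mul _)
    have h1 : (∫ t in (0:ℝ)..(T - τ), ‖i (u (t + τ)) - i (u t)‖ ^ 2)
        ≤ ∫ t in (0:ℝ)..(T - τ),
            ((2 * μ)⁻¹ * (F (t + τ) - F t) + μ * τ * (‖u (t + τ)‖ ^ 2 + ‖u t‖ ^ 2)) :=
      intervalIntegral.integral_mono_on hTτ huH2 hGint (hpt μ hμ)
    have h2 : (∫ t in (0:ℝ)..(T - τ),
            ((2 * μ)⁻¹ * (F (t + τ) - F t) + μ * τ * (‖u (t + τ)‖ ^ 2 + ‖u t‖ ^ 2)))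
        = (2 * μ)⁻¹ * (∫ t in (0:ℝ)..(T - τ), (F (t + τ) - F t))
          + μ * τ * ((∫ t in (0:ℝ)..(T - τ), ‖u (t + τ)‖ ^ 2)
            + ∫ t in (0:ℝ)..(T - τ), ‖u t‖ ^ 2) := by
      rw [intervalIntegral.integral_add ((hFshiftint.sub hFint).const_mul _)
        ((hushiftint.add huplainint).const_mul _),
        intervalIntegral.integral_const_mul, intervalIntegral.integral_const_mul,
        intervalIntegral.integral_add hushiftint huplainint]
    have h3 : (2 * μ)⁻¹ * (∫ t in (0:ℝ)..(T - τ), (F (t + τ) - F t))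
        ≤ (2 * μ)⁻¹ * (τ * X) :=
      mul_le_mul_of_nonneg_left hFbound (by positivity)
    have h4 : μ * τ * ((∫ t in (0:ℝ)..(T - τ), ‖u (t + τ)‖ ^ 2)
            + ∫ t in (0:ℝ)..(T - τ), ‖u t‖ ^ 2) ≤ μ * τ * (Y + Y) := by
      apply mul_le_mul_of_nonneg_left (by linarith [hshiftY, hplainY]) (by positivity)
    have h5 : (2 * μ)⁻¹ * (τ * X) = μ⁻¹ * (τ * X / 2) := by
      rw [mul_inv]; ring
    have h6 : μ * τ * (Y + Y) = μ * (2 * τ * Y) := by ring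
    calc (∫ t in (0:ℝ)..(T - τ), ‖i (u (t + τ)) - i (u t)‖ ^ 2)
        ≤ _ := h1
      _ = _ := h2
      _ ≤ (2 * μ)⁻¹ * (τ * X) + μ * τ * (Y + Y) := add_le_add h3 h4
      _ = μ⁻¹ * (τ * X / 2) + μ * (2 * τ * Y) := by rw [h5, h6]
  have key := amgm_inf (S := ∫ t in (0:ℝ)..(T - τ), ‖i (u (t + τ)) - i (u t)‖ ^ 2)
    (a := τ * X / 2) (b := 2 * τ * Y) (by positivity) (by positivity) hint
  have hsqrt : 2 * Real.sqrt (τ * X / 2) * Real.sqrt (2 * τ * Y)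
      = τ * (2 * Real.sqrt X * Real.sqrt Y) := by
    rw [mul_assoc, ← Real.sqrt_mul (by positivity)]
    have : τ * X / 2 * (2 * τ * Y) = τ ^ 2 * (X * Y) := by ring
    rw [this, Real.sqrt_mul (by positivity), Real.sqrt_sq hτ0.le,
      Real.sqrt_mul hXnn]
    ring
  linarith [key, hsqrt.le, hsqrt.ge]
end
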